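/- arXiv:1409.7020 — 4 statements merged into one kernel-verified Lean document; each statement's English description precedes it below -/
import Mathlib

section
/- Let G be a finite simple graph on vertex set {x_1,...,x_n}, let I = I(G) be its edge ideal in R = k[x_1,...,x_n], and let {x,y} be an edge of G. Then (I^2 : xy) = (I, E), where E is the ideal of R generated by all monomials x_i y_j with x_i ∈ N(x) and y_j ∈ N(y). -/
open MvPolynomial
open Finsupp (single)

/-- The edge ideal of a (simple) graph `G`: the ideal of the polynomial ring generated by
the monomials `X i * X j` for the edges `{i, j}` of `G`. -/
noncomputable def edgeIdeal (k : Type*) [Field k] {σ : Type*} (G : SimpleGraph σ) :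
    Ideal (MvPolynomial σ k) :=
  Ideal.span {m | ∃ i j, G.Adj i j ∧ m = X i * X j}

/-- The maximal homogeneous ideal `(x_1, ..., x_n)` of the polynomial ring. -/
noncomputable def maxIdeal (k : Type*) [Field k] (σ : Type*) : Ideal (MvPolynomial σ k) :=
  Ideal.span (Set.range X)

/-- `qdepth k J` is `depth R/J`: the maximal length of an `R/J`-regular sequence contained
in the maximal homogeneous ideal `(x_1, ..., x_n)` of `R = k[x_1, ..., x_n]`. -/
noncomputable def qdepth (k : Type*) [Field k] {σ : Type*} (J : Ideal (MvPolynomial σ k)) : ℕ :=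
  sSup {r | ∃ s : List (MvPolynomial σ k), s.length = r ∧
    (∀ x ∈ s, x ∈ maxIdeal k σ) ∧
    RingTheory.Sequence.IsRegular (MvPolynomial σ k ⧸ J) s}

namespace SqColonAux

variable {k : Type*} [Field k] {n : ℕ}

/-- Membership in the ideal spanned by a set of monic monomials. -/
lemma mem_monSpan_iff {T : Set (Fin n →₀ ℕ)} {f : MvPolynomial (Fin n) k} :
    f ∈ Ideal.span ((fun e => (monomial e (1:k))) '' T) ↔
      ∀ d ∈ f.support, ∃ e ∈ T, e ≤ d := by
  classical
  constructor
  · intro hf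
    refine Submodule.span_induction
      (p := fun g _ => ∀ d ∈ g.support, ∃ e ∈ T, e ≤ d) ?_ ?_ ?_ ?_ hf
    · rintro g ⟨e, he, rfl⟩ d hd
      rw [MvPolynomial.mem_support_iff, coeff_monomial] at hd
      split_ifs at hd with h
      · exact ⟨e, he, h ▸ le_refl _⟩
      · simp at hd
    · simp
    · intro g h _ _ hg hh d hd
      rcases Finset.mem_union.mp (MvPolynomial.support_add hd) with h' | h'
      · exact hg d h'
      · exact hh d h'
    · intro a g _ hg d hd
      rw [smul_eq_mul] at hd
      obtain ⟨d1, hd1, d2, hd2, rfl⟩ := Finset.mem_add.mp (MvPolynomial.support_mul a g hd)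
      obtain ⟨e, he, hle⟩ := hg d2 hd2
      exact ⟨e, he, hle.trans (self_le_add_left _ _)⟩
  · intro h
    suffices H : ∀ N (g : MvPolynomial (Fin n) k), g.support.card ≤ N →
        (∀ d ∈ g.support, ∃ e ∈ T, e ≤ d) →
        g ∈ Ideal.span ((fun e => (monomial e (1:k))) '' T) by
      exact H f.support.card f le_rfl h
    intro N
    induction N with
    | zero =>
      intro g hg _
      have : g = 0 := MvPolynomial.support_eq_empty.mp
        (Finset.card_eq_zero.mp (Nat.le_zero.mp hg))
      simp [this]
    | succ N ih =>
      intro g hcard hall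
      by_cases h0 : g = 0
      · simp [h0]
      · obtain ⟨d, hd⟩ := (MvPolynomial.support_nonempty.mpr h0)
        obtain ⟨e, heT, hed⟩ := hall d hd
        have hmon : (monomial d (coeff d g) : MvPolynomial (Fin n) k)
            ∈ Ideal.span ((fun e => (monomial e (1:k))) '' T) := by
          have heq : (monomial d (coeff d g) : MvPolynomial (Fin n) k)
              = monomial (d - e) (coeff d g) * monomial e 1 := by
            rw [monomial_mul, mul_one, tsub_add_cancel_of_le hed]
          rw [heq]
          exact Ideal.mul_mem_left _ _ (Ideal.subset_span ⟨e, heT, rfl⟩)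
        set g' := g - monomial d (coeff d g) with hg'
        have hsub : g'.support ⊆ g.support.erase d := by
          intro v hv
          rw [MvPolynomial.mem_support_iff, hg', coeff_sub, coeff_monomial] at hv
          split_ifs at hv with hdv
          · subst hdv; simp at hv
          · rw [sub_zero] at hv
            exact Finset.mem_erase.mpr ⟨fun h => hdv h.symm,
              MvPolynomial.mem_support_iff.mpr hv⟩
        have hc : g'.support.card ≤ N := by
          have h1 := Finset.card_le_card hsub
          have h2 := Finset.card_erase_of_mem hd
          omega
        have : g = g' + monomial d (coeff d g) := by rw [hg']; ring
        rw [this]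
        exact Ideal.add_mem _
          (ih g' hc (fun d' hd' => hall d' (Finset.mem_of_mem_erase (hsub hd'))))
          hmon

lemma XX_eq (i j : Fin n) :
    (X i * X j : MvPolynomial (Fin n) k) = monomial (single i 1 + single j 1) 1 := by
  rw [X, X, monomial_mul, one_mul]

lemma normalize_edge {G : SimpleGraph (Fin n)} {x y a b : Fin n} (h1 : G.Adj a b)
    (p : x = a ∨ x = b ∨ y = a ∨ y = b) :
    ∃ z w, (z = x ∨ z = y) ∧ G.Adj z w ∧
      single a 1 + single b 1 = (single z 1 + single w 1 : Fin n →₀ ℕ) := by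
  rcases p with h | h | h | h
  · exact ⟨x, b, Or.inl rfl, h ▸ h1, by rw [h]⟩
  · exact ⟨x, a, Or.inl rfl, (h ▸ h1).symm, by rw [h, add_comm]⟩
  · exact ⟨y, b, Or.inr rfl, h ▸ h1, by rw [h]⟩
  · exact ⟨y, a, Or.inr rfl, (h ▸ h1).symm, by rw [h, add_comm]⟩

private lemma nefact {u v : Fin n} (h : u ≠ v) : (u:ℕ) ≠ (v:ℕ) :=
  fun hh => h (Fin.val_injective hh)

/-- mixed case: one edge through `x`, the other through `y` -/
lemma key_mixed {x y w w' : Fin n} {d0 : Fin n →₀ ℕ}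
    (hle : (single x 1 + single w 1) + (single y 1 + single w' 1)
        ≤ d0 + (single x 1 + single y 1)) :
    single w 1 + single w' 1 ≤ d0 := by
  rw [Finsupp.le_def]
  intro v
  have h := Finsupp.le_def.mp hle v
  simp only [Finsupp.add_apply, Finsupp.single_apply, Fin.ext_iff] at h ⊢
  split_ifs at h ⊢ <;> omega

/-- double case: both edges through `x` -/
lemma key_double (G : SimpleGraph (Fin n)) (x y w w' : Fin n) (d0 : Fin n →₀ ℕ)
    (hxy : G.Adj x y) (h1 : G.Adj x w) (h2 : G.Adj x w')
    (hle : (single x 1 + single w 1) + (single x 1 + single w' 1)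
        ≤ d0 + (single x 1 + single y 1)) :
    ∃ i j, G.Adj i j ∧ single i 1 + single j 1 ≤ d0 := by
  have nxy := nefact hxy.ne
  have nxw := nefact h1.ne
  have nxw' := nefact h2.ne
  have H := fun v => Finsupp.le_def.mp hle v
  simp only [Finsupp.add_apply, Finsupp.single_apply, Fin.ext_iff] at H
  rcases eq_or_ne w y with hwy | hwy
  · have e1 : (w:ℕ) = (y:ℕ) := congrArg Fin.val hwy
    refine ⟨x, w', h2, ?_⟩
    rw [Finsupp.le_def]
    intro v
    have h := H v
    simp only [Finsupp.add_apply, Finsupp.single_apply, Fin.ext_iff]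
    split_ifs at h ⊢ <;> omega
  · rcases eq_or_ne w' y with hwy' | hwy'
    · have e1 : (w':ℕ) = (y:ℕ) := congrArg Fin.val hwy'
      refine ⟨x, w, h1, ?_⟩
      rw [Finsupp.le_def]
      intro v
      have h := H v
      simp only [Finsupp.add_apply, Finsupp.single_apply, Fin.ext_iff]
      split_ifs at h ⊢ <;> omega
    · have e1 := nefact hwy
      have e2 := nefact hwy'
      refine ⟨x, w, h1, ?_⟩
      rw [Finsupp.le_def]
      intro v
      have h := H v
      simp only [Finsupp.add_apply, Finsupp.single_apply, Fin.ext_iff]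
      split_ifs at h ⊢ <;> omega

/-- avoided case: an edge not meeting `{x, y}` -/
lemma key_avoid {x y a b c d : Fin n} {d0 : Fin n →₀ ℕ}
    (q1 : x ≠ a) (q2 : x ≠ b) (q3 : y ≠ a) (q4 : y ≠ b)
    (hle : (single a 1 + single b 1) + (single c 1 + single d 1)
        ≤ d0 + (single x 1 + single y 1)) :
    single a 1 + single b 1 ≤ d0 := by
  have n1 := nefact q1; have n2 := nefact q2
  have n3 := nefact q3; have n4 := nefact q4
  rw [Finsupp.le_def]
  intro v
  have h := Finsupp.le_def.mp hle v
  simp only [Finsupp.add_apply, Finsupp.single_apply, Fin.ext_iff] at h ⊢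
  split_ifs at h ⊢ <;> omega

lemma key_combinatorial (G : SimpleGraph (Fin n)) (x y a b c d : Fin n) (d0 : Fin n →₀ ℕ)
    (hxy : G.Adj x y) (h1 : G.Adj a b) (h2 : G.Adj c d)
    (hle : (single a 1 + single b 1) + (single c 1 + single d 1)
        ≤ d0 + (single x 1 + single y 1)) :
    (∃ i j, G.Adj i j ∧ single i 1 + single j 1 ≤ d0) ∨
    (∃ i j, G.Adj x i ∧ G.Adj y j ∧ single i 1 + single j 1 ≤ d0) := by
  classical
  by_cases p1 : x = a ∨ x = b ∨ y = a ∨ y = b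
  · by_cases p2 : x = c ∨ x = d ∨ y = c ∨ y = d
    · obtain ⟨z, w, hz, hzw, heq⟩ := normalize_edge h1 p1
      obtain ⟨z', w', hz', hzw', heq'⟩ := normalize_edge h2 p2
      rw [heq, heq'] at hle
      rcases hz with hzx | hzy <;> rcases hz' with hzx' | hzy'
      · rw [hzx] at hzw hle
        rw [hzx'] at hzw' hle
        exact Or.inl (key_double G x y w w' d0 hxy hzw hzw' hle)
      · rw [hzx] at hzw hle
        rw [hzy'] at hzw' hle
        exact Or.inr ⟨w, w', hzw, hzw', key_mixed hle⟩
      · rw [hzy] at hzw hle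
        rw [hzx'] at hzw' hle
        rw [add_comm (single y 1 + single w 1 : Fin n →₀ ℕ)] at hle
        exact Or.inr ⟨w', w, hzw', hzw, key_mixed hle⟩
      · rw [hzy] at hzw hle
        rw [hzy'] at hzw' hle
        rw [add_comm (single x 1) (single y 1)] at hle
        exact Or.inl (key_double G y x w w' d0 hxy.symm hzw hzw' hle)
    · push_neg at p2
      obtain ⟨q1, q2, q3, q4⟩ := p2
      rw [add_comm (single a 1 + single b 1 : Fin n →₀ ℕ)] at hle
      exact Or.inl ⟨c, d, h2, key_avoid q1 q2 q3 q4 hle⟩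
  · push_neg at p1
    obtain ⟨q1, q2, q3, q4⟩ := p1
    exact Or.inl ⟨a, b, h1, key_avoid q1 q2 q3 q4 hle⟩

end SqColonAux

open SqColonAux

/-- **Lemma (colon of the square by an edge).** If `{x, y}` is an edge of `G`, then
`(I² : xy) = (I, E)` where `E` is generated by the monomials `x_i y_j` with
`x_i ∈ N(x)` and `y_j ∈ N(y)`. -/
theorem sq_edgeIdeal_colon_edge (k : Type*) [Field k] {n : ℕ}
    (G : SimpleGraph (Fin n)) (x y : Fin n) (hxy : G.Adj x y) :
    (edgeIdeal k G ^ 2).colon ((Ideal.span {X x * X y} : Ideal (MvPolynomial (Fin n) k)) : Set (MvPolynomial (Fin n) k)) =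
      edgeIdeal k G ⊔
        Ideal.span {m : MvPolynomial (Fin n) k |
          ∃ i j : Fin n, G.Adj x i ∧ G.Adj y j ∧ m = X i * X j} := by
  classical
  set T1 : Set (Fin n →₀ ℕ) := {e | ∃ i j, G.Adj i j ∧ e = single i 1 + single j 1} with hT1
  set TE : Set (Fin n →₀ ℕ) :=
    {e | ∃ i j, G.Adj x i ∧ G.Adj y j ∧ e = single i 1 + single j 1} with hTE
  set T2 : Set (Fin n →₀ ℕ) := {e | ∃ a b c d, G.Adj a b ∧ G.Adj c d ∧
    e = (single a 1 + single b 1) + (single c 1 + single d 1)} with hT2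
  have hI : edgeIdeal k G = Ideal.span ((fun e => (monomial e (1:k))) '' T1) := by
    rw [edgeIdeal]
    congr 1
    ext m
    constructor
    · rintro ⟨i, j, hij, rfl⟩
      exact ⟨_, ⟨i, j, hij, rfl⟩, (XX_eq i j).symm⟩
    · rintro ⟨e, ⟨i, j, hij, rfl⟩, rfl⟩
      exact ⟨i, j, hij, (XX_eq i j).symm⟩
  have hE : Ideal.span {m : MvPolynomial (Fin n) k |
        ∃ i j : Fin n, G.Adj x i ∧ G.Adj y j ∧ m = X i * X j}
      = Ideal.span ((fun e => (monomial e (1:k))) '' TE) := by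
    congr 1
    ext m
    constructor
    · rintro ⟨i, j, hxi, hyj, rfl⟩
      exact ⟨_, ⟨i, j, hxi, hyj, rfl⟩, (XX_eq i j).symm⟩
    · rintro ⟨e, ⟨i, j, hxi, hyj, rfl⟩, rfl⟩
      exact ⟨i, j, hxi, hyj, (XX_eq i j).symm⟩
  have hsq : edgeIdeal k G ^ 2 = Ideal.span ((fun e => (monomial e (1:k))) '' T2) := by
    rw [pow_two, hI, Ideal.span_mul_span']
    congr 1
    ext m
    constructor
    · rintro ⟨m1, ⟨e1, ⟨i, j, hij, rfl⟩, rfl⟩, m2, ⟨e2, ⟨c, d, hcd, rfl⟩, rfl⟩, rfl⟩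
      exact ⟨_, ⟨i, j, c, d, hij, hcd, rfl⟩, by simp [monomial_mul]⟩
    · rintro ⟨e, ⟨a, b, c, d, h1, h2, rfl⟩, rfl⟩
      refine ⟨monomial (single a 1 + single b 1) 1, ⟨_, ⟨a, b, h1, rfl⟩, rfl⟩,
        monomial (single c 1 + single d 1) 1, ⟨_, ⟨c, d, h2, rfl⟩, rfl⟩, ?_⟩
      simp [monomial_mul]
  apply le_antisymm
  · -- hard direction
    intro f hf
    have hfx : f * (X x * X y) ∈ edgeIdeal k G ^ 2 := Ideal.mem_colon_span_singleton.mp hf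
    rw [hsq, mem_monSpan_iff] at hfx
    rw [hE, hI, ← Ideal.span_union, ← Set.image_union, mem_monSpan_iff]
    intro d0 hd0
    have hmem : d0 + (single x 1 + single y 1) ∈ (f * (X x * X y)).support := by
      rw [MvPolynomial.mem_support_iff, XX_eq]
      have := coeff_mul_monomial d0 (single x 1 + single y 1) (1:k) f
      rw [this, mul_one]
      exact MvPolynomial.mem_support_iff.mp hd0
    obtain ⟨e, ⟨a, b, c, d, h1, h2, rfl⟩, hle⟩ := hfx _ hmem
    rcases key_combinatorial G x y a b c d d0 hxy h1 h2 hle with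
      ⟨i, j, hij, hle'⟩ | ⟨i, j, hxi, hyj, hle'⟩
    · exact ⟨_, Or.inl ⟨i, j, hij, rfl⟩, hle'⟩
    · exact ⟨_, Or.inr ⟨i, j, hxi, hyj, rfl⟩, hle'⟩
  · -- easy direction
    rw [sup_le_iff]
    constructor
    · intro f hf
      rw [Ideal.mem_colon_span_singleton, pow_two]
      exact Ideal.mul_mem_mul hf (Ideal.subset_span ⟨x, y, hxy, rfl⟩)
    · rw [Ideal.span_le]
      rintro m ⟨i, j, hxi, hyj, rfl⟩
      rw [SetLike.mem_coe, Ideal.mem_colon_span_singleton, pow_two]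
      have hre : (X i * X j) * (X x * X y) = ((X x * X i) * (X y * X j) :
          MvPolynomial (Fin n) k) := by ring
      rw [hre]
      exact Ideal.mul_mem_mul (Ideal.subset_span ⟨x, i, hxi, rfl⟩)
        (Ideal.subset_span ⟨y, j, hyj, rfl⟩)
end

section
/- Let G be a finite simple graph on vertex set {x_1,...,x_n}, let I = I(G) be its edge ideal in R = k[x_1,...,x_n], let t ≥ 1, and let x_1,...,x_{2t} be vertices (not necessarily distinct) such that the monomial x_1⋯x_{2t} lies in I^t. Then (I^{t+1} : x_1⋯x_{2t}) = (I, E), where E is the ideal generated by all degree-two monomials y_1 y_2 supported on ⋃_{i=1}^{2t} N(x_i) satisfying y_1 y_2 x_1⋯x_{2t} ∈ I^{t+1}. -/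
open MvPolynomial

open Pointwise

namespace EdgeColonAux

variable {n : ℕ}

/-- The exponent vector of an edge monomial. -/
def IsEdge (G : SimpleGraph (Fin n)) (d : Fin n →₀ ℕ) : Prop :=
  ∃ a b, G.Adj a b ∧ d = Finsupp.single a 1 + Finsupp.single b 1

lemma degree_add (a b : Fin n →₀ ℕ) :
    Finsupp.degree (a + b) = Finsupp.degree a + Finsupp.degree b := by
  simp only [Finsupp.degree_eq_weight_one, map_add]

lemma degree_single (a : Fin n) : Finsupp.degree (Finsupp.single a (1:ℕ)) = 1 := by
  exact Finsupp.degree_single a 1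

lemma degree_mono {a b : Fin n →₀ ℕ} (h : a ≤ b) : Finsupp.degree a ≤ Finsupp.degree b := by
  have h2 : a + (b - a) = b := add_tsub_cancel_of_le h
  have := degree_add a (b - a)
  rw [h2] at this
  omega

lemma eq_of_le_of_degree_eq {a b : Fin n →₀ ℕ} (h : a ≤ b)
    (hw : Finsupp.degree a = Finsupp.degree b) : a = b := by
  have h2 : a + (b - a) = b := add_tsub_cancel_of_le h
  have h3 := degree_add a (b - a)
  rw [h2] at h3
  have h4 : Finsupp.degree (b - a) = 0 := by omega
  rw [Finsupp.degree_eq_zero_iff] at h4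
  rw [← h2, h4, add_zero]

lemma IsEdge.degree {G : SimpleGraph (Fin n)} {e : Fin n →₀ ℕ} (h : IsEdge G e) :
    Finsupp.degree e = 2 := by
  obtain ⟨a, b, _, rfl⟩ := h
  rw [degree_add, degree_single, degree_single]

lemma IsEdge.endpoint {G : SimpleGraph (Fin n)} {e : Fin n →₀ ℕ} (h : IsEdge G e) {v : Fin n}
    (hv : 0 < e v) : ∃ z, G.Adj v z ∧ e = Finsupp.single v 1 + Finsupp.single z 1 := by
  obtain ⟨a, b, hab, rfl⟩ := h
  have hv' : v = a ∨ v = b := by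
    by_contra hc
    push_neg at hc
    rw [Finsupp.add_apply, Finsupp.single_apply, Finsupp.single_apply,
      if_neg (fun h => hc.1 h.symm), if_neg (fun h => hc.2 h.symm)] at hv
    omega
  rcases hv' with rfl | rfl
  · exact ⟨b, hab, rfl⟩
  · exact ⟨a, hab.symm, add_comm _ _⟩

lemma exists_mem_of_sum_pos {S : Multiset (Fin n →₀ ℕ)} {v : Fin n}
    (h : 0 < S.sum v) : ∃ e ∈ S, 0 < e v := by
  induction S using Multiset.induction with
  | empty => simp at h
  | cons a s ih =>
    rw [Multiset.sum_cons, Finsupp.add_apply] at h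
    by_cases h1 : 0 < a v
    · exact ⟨a, Multiset.mem_cons_self a s, h1⟩
    · obtain ⟨e, he, hev⟩ := ih (by omega)
      exact ⟨e, Multiset.mem_cons_of_mem he, hev⟩
  

lemma degree_sum_edges {G : SimpleGraph (Fin n)} {S : Multiset (Fin n →₀ ℕ)}
    (hS : ∀ e ∈ S, IsEdge G e) : Finsupp.degree S.sum = 2 * Multiset.card S := by
  induction S using Multiset.induction with
  | empty => simp
  | cons a s ih =>
    rw [Multiset.sum_cons, degree_add, (hS a (Multiset.mem_cons_self a s)).degree,
      ih (fun e he => hS e (Multiset.mem_cons_of_mem he)), Multiset.card_cons]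
    ring

lemma mem_le_sum {S : Multiset (Fin n →₀ ℕ)} {e : Fin n →₀ ℕ} (he : e ∈ S) : e ≤ S.sum :=
  Multiset.single_le_sum (fun _ _ => zero_le) _ he

lemma pair_le {m : Fin n →₀ ℕ} {y₁ y₂ : Fin n} (h1 : 0 < m y₁)
    (h2 : 0 < (m - Finsupp.single y₁ 1 : Fin n →₀ ℕ) y₂) : Finsupp.single y₁ 1 + Finsupp.single y₂ 1 ≤ m := by
  rw [Finsupp.tsub_apply, Finsupp.single_apply] at h2
  rw [Finsupp.le_def]
  intro v
  rw [Finsupp.add_apply, Finsupp.single_apply, Finsupp.single_apply]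
  split_ifs at h2 ⊢ <;> subst_eqs <;> first | omega | simp_all


lemma key (G : SimpleGraph (Fin n)) (c : ℕ) :
    ∀ (B R : Multiset (Fin n →₀ ℕ)) (m : Fin n →₀ ℕ),
      (∀ e ∈ B, IsEdge G e) → (∀ e ∈ R, IsEdge G e) →
      Multiset.card R = c → Multiset.card B = c + 1 →
      B.sum ≤ m + R.sum →
      (∃ e, IsEdge G e ∧ e ≤ m) ∨
      ∃ (y₁ y₂ : Fin n) (W : Multiset (Fin n →₀ ℕ)),
        (∀ e ∈ W, IsEdge G e) ∧ Multiset.card W = c + 1 ∧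
        W.sum ≤ Finsupp.single y₁ 1 + Finsupp.single y₂ 1 + R.sum ∧
        Finsupp.single y₁ 1 + Finsupp.single y₂ 1 ≤ m ∧
        (∃ v, 0 < R.sum v ∧ G.Adj y₁ v) ∧ (∃ v, 0 < R.sum v ∧ G.Adj y₂ v) := by
  induction c with
  | zero =>
    intro B R m hB hR hRc hBc hle
    left
    obtain ⟨e, rfl⟩ := Multiset.card_eq_one.mp hBc
    have hR0 : R = 0 := Multiset.card_eq_zero.mp hRc
    subst hR0
    refine ⟨e, hB e (Multiset.mem_singleton_self e), ?_⟩
    simpa using hle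
  | succ c ih =>
    intro B R m hB hR hRc hBc hle
    by_cases hno' : ∃ e, IsEdge G e ∧ e ≤ m
    · exact Or.inl hno'
    push_neg at hno'
    have hno : ∀ e, IsEdge G e → ¬ e ≤ m := hno'
    right
    have hsv : ∀ (a v : Fin n), (Finsupp.single a 1 : Fin n →₀ ℕ) v = if a = v then 1 else 0 :=
      fun a v => Finsupp.single_apply
    -- find `y₁`, an endpoint of a blue edge supported in `m`
    have hlt : ∃ v, R.sum v < B.sum v := by
      by_contra hc
      push_neg at hc
      have h1 := degree_mono (Finsupp.le_def.mpr hc)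
      rw [degree_sum_edges hB, degree_sum_edges hR, hRc, hBc] at h1
      omega
    obtain ⟨y₁, hy₁⟩ := hlt
    have hm₁ : 0 < m y₁ := by
      have h1 := Finsupp.le_def.mp hle y₁
      rw [Finsupp.add_apply] at h1
      omega
    obtain ⟨e, heB, hey⟩ := exists_mem_of_sum_pos (S := B) (v := y₁) (by omega)
    obtain ⟨z, hadjz, hez⟩ := (hB e heB).endpoint hey
    have hyz : y₁ ≠ z := hadjz.ne
    -- `z` must be covered by red edges
    have hmz : m z = 0 := by
      by_contra hc
      refine hno e ⟨y₁, z, hadjz, hez⟩ ?_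
      rw [hez]
      refine pair_le hm₁ ?_
      rw [Finsupp.tsub_apply, hsv y₁ z, if_neg hyz]
      omega
    have hez1 : 0 < e z := by
      rw [hez, Finsupp.add_apply, Finsupp.single_eq_same]
      omega
    have hRz : 0 < R.sum z := by
      have h1 := Finsupp.le_def.mp (mem_le_sum heB) z
      have h2 := Finsupp.le_def.mp hle z
      rw [Finsupp.add_apply] at h2
      omega
    obtain ⟨f, hfR, hfz⟩ := exists_mem_of_sum_pos hRz
    obtain ⟨w, hadjw, hfw⟩ := (hR f hfR).endpoint hfz
    have hzw : z ≠ w := hadjw.ne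
    have hfw1 : 0 < f w := by
      rw [hfw, Finsupp.add_apply, Finsupp.single_eq_same]
      omega
    have hRw : 0 < R.sum w := by
      have h1 := Finsupp.le_def.mp (mem_le_sum hfR) w
      omega
    -- set up the recursive call
    set m' := m - Finsupp.single y₁ 1 + Finsupp.single w 1 with hm'def
    have hm'v : ∀ v, m' v = m v - (Finsupp.single y₁ 1 : Fin n →₀ ℕ) v
        + (Finsupp.single w 1 : Fin n →₀ ℕ) v := by
      intro v
      rw [hm'def, Finsupp.add_apply, Finsupp.tsub_apply]
    set B' := B.erase e with hB'def
    set R' := R.erase f with hR'def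
    have hBsplit : B = e ::ₘ B' := (Multiset.cons_erase heB).symm
    have hRsplit : R = f ::ₘ R' := (Multiset.cons_erase hfR).symm
    have hB'e : ∀ e' ∈ B', IsEdge G e' := fun e' he' => hB e' (Multiset.mem_of_mem_erase he')
    have hR'e : ∀ e' ∈ R', IsEdge G e' := fun e' he' => hR e' (Multiset.mem_of_mem_erase he')
    have hB'c : Multiset.card B' = c + 1 := by
      have h1 := congrArg Multiset.card hBsplit
      rw [Multiset.card_cons] at h1
      omega
    have hR'c : Multiset.card R' = c := by
      have h1 := congrArg Multiset.card hRsplit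
      rw [Multiset.card_cons] at h1
      omega
    have hBsum : ∀ v, B.sum v = e v + B'.sum v := by
      intro v
      rw [hBsplit, Multiset.sum_cons, Finsupp.add_apply]
    have hRsum : ∀ v, R.sum v = f v + R'.sum v := by
      intro v
      rw [hRsplit, Multiset.sum_cons, Finsupp.add_apply]
    have hRsum' : R.sum = f + R'.sum := by rw [hRsplit, Multiset.sum_cons]
    have hsy₁ : ∀ v, (Finsupp.single y₁ 1 : Fin n →₀ ℕ) v ≤ m v := by
      intro v
      rw [hsv]
      split_ifs with h
      · subst h; omega
      · omega
    have hle' : B'.sum ≤ m' + R'.sum := by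
      rw [Finsupp.le_def]
      intro v
      have h1 := Finsupp.le_def.mp hle v
      rw [Finsupp.add_apply] at h1
      have h2 := hBsum v
      have h3 := hRsum v
      have h4 : e v = (Finsupp.single y₁ 1 : Fin n →₀ ℕ) v
          + (Finsupp.single z 1 : Fin n →₀ ℕ) v := by rw [hez, Finsupp.add_apply]
      have h5 : f v = (Finsupp.single z 1 : Fin n →₀ ℕ) v
          + (Finsupp.single w 1 : Fin n →₀ ℕ) v := by rw [hfw, Finsupp.add_apply]
      have h6 := hm'v v
      have h7 := hsy₁ v
      rw [Finsupp.add_apply, h6]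
      omega
    rcases ih B' R' m' hB'e hR'e hR'c hB'c hle' with ⟨g, hg, hgle⟩ |
      ⟨y₁', y₂', W', hW'e, hW'c, hW's, hy', hadj₁', hadj₂'⟩
    · -- the recursive call found an edge `g ≤ m'`; it must use `w`
      have hgw : 0 < g w := by
        by_contra hc
        refine hno g hg ?_
        rw [Finsupp.le_def]
        intro v
        have h1 := Finsupp.le_def.mp hgle v
        have h6 := hm'v v
        have h7 := hsy₁ v
        by_cases hvw : v = w
        · subst hvw; omega
        · rw [hsv w v, if_neg (fun h => hvw h.symm)] at h6
          omega
      obtain ⟨y₂, hadjy₂, hgw2⟩ := hg.endpoint hgw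
      have hwy₂ : w ≠ y₂ := hadjy₂.ne
      have hy₂m : 0 < (m - Finsupp.single y₁ 1 : Fin n →₀ ℕ) y₂ := by
        have h1 := Finsupp.le_def.mp hgle y₂
        have h6 := hm'v y₂
        rw [hsv w y₂, if_neg hwy₂] at h6
        rw [hgw2, Finsupp.add_apply, hsv w y₂, if_neg hwy₂, Finsupp.single_eq_same] at h1
        rw [Finsupp.tsub_apply]
        rw [hsv y₁ y₂] at h6 ⊢
        omega
      refine ⟨y₁, y₂, e ::ₘ g ::ₘ R', ?_, ?_, ?_, pair_le hm₁ hy₂m,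
        ⟨z, hRz, hadjz⟩, ⟨w, hRw, hadjy₂.symm⟩⟩
      · intro e' he'
        rcases Multiset.mem_cons.mp he' with rfl | he'
        · exact hB _ heB
        rcases Multiset.mem_cons.mp he' with rfl | he'
        · exact hg
        · exact hR'e e' he'
      · rw [Multiset.card_cons, Multiset.card_cons, hR'c]
      · rw [Multiset.sum_cons, Multiset.sum_cons, hez, hgw2, hRsum', hfw]
        apply le_of_eq
        abel
    · -- the recursive call found a pair
      by_cases hcase : Finsupp.single y₁' 1 + Finsupp.single y₂' 1 ≤ m - Finsupp.single y₁ 1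
      · refine ⟨y₁', y₂', f ::ₘ W', ?_, ?_, ?_, hcase.trans tsub_le_self, ?_, ?_⟩
        · intro e' he'
          rcases Multiset.mem_cons.mp he' with rfl | he'
          · exact hR _ hfR
          · exact hW'e e' he'
        · rw [Multiset.card_cons, hW'c]
        · calc (f ::ₘ W').sum = f + W'.sum := Multiset.sum_cons f W'
            _ ≤ f + (Finsupp.single y₁' 1 + Finsupp.single y₂' 1 + R'.sum) :=
                add_le_add_right hW's f
            _ = Finsupp.single y₁' 1 + Finsupp.single y₂' 1 + R.sum := by
                rw [hRsum']; abel
        · obtain ⟨v, hv, hadj⟩ := hadj₁'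
          exact ⟨v, by have := hRsum v; omega, hadj⟩
        · obtain ⟨v, hv, hadj⟩ := hadj₂'
          exact ⟨v, by have := hRsum v; omega, hadj⟩
      · -- the pair uses the artificial vertex `w`
        have hw' : y₁' = w ∨ y₂' = w := by
          by_contra hc
          push_neg at hc
          refine hcase ?_
          rw [Finsupp.le_def]
          intro v
          have h1 := Finsupp.le_def.mp hy' v
          have h6 := hm'v v
          rw [Finsupp.tsub_apply]
          by_cases hvw : v = w
          · subst hvw
            rw [Finsupp.add_apply, hsv y₁' v, if_neg hc.1, hsv y₂' v, if_neg hc.2]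
            omega
          · rw [hsv w v, if_neg (fun h => hvw h.symm)] at h6
            omega
        have hkey : ∃ y, (0 < (m - Finsupp.single y₁ 1 : Fin n →₀ ℕ) y) ∧
            (Finsupp.single y₁' 1 + Finsupp.single y₂' 1 : Fin n →₀ ℕ)
              = Finsupp.single y 1 + Finsupp.single w 1 ∧
            (∃ v, 0 < R.sum v ∧ G.Adj y v) := by
          have hm'w : ∀ u, u ≠ w → 0 < (Finsupp.single y₁' 1 + Finsupp.single y₂' 1 : Fin n →₀ ℕ) u →
              0 < (m - Finsupp.single y₁ 1 : Fin n →₀ ℕ) u := by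
            intro u hu hpos
            have h1 := Finsupp.le_def.mp hy' u
            have h6 := hm'v u
            rw [hsv w u, if_neg (fun h => hu h.symm)] at h6
            rw [Finsupp.tsub_apply]
            omega
          have hboth : y₁' = w → y₂' = w → 0 < (m - Finsupp.single y₁ 1 : Fin n →₀ ℕ) w := by
            intro ha hb
            have hc := Finsupp.le_def.mp hy' w
            have h6 := hm'v w
            rw [Finsupp.single_eq_same] at h6
            rw [Finsupp.add_apply, hsv y₁' w, if_pos ha, hsv y₂' w, if_pos hb] at hc
            rw [Finsupp.tsub_apply]
            omega
          rcases hw' with h1 | h1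
          · by_cases h2 : y₂' = w
            · exact ⟨w, hboth h1 h2, by rw [h1, h2], ⟨z, hRz, hadjw.symm⟩⟩
            · refine ⟨y₂', hm'w y₂' h2 (by rw [Finsupp.add_apply, Finsupp.single_eq_same]; omega),
                by rw [h1]; exact add_comm _ _, ?_⟩
              obtain ⟨v, hv, hadj⟩ := hadj₂'
              exact ⟨v, by have := hRsum v; omega, hadj⟩
          · by_cases h2 : y₁' = w
            · exact ⟨w, hboth h2 h1, by rw [h1, h2], ⟨z, hRz, hadjw.symm⟩⟩
            · refine ⟨y₁', hm'w y₁' h2 (by rw [Finsupp.add_apply, Finsupp.single_eq_same]; omega),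
                by rw [h1], ?_⟩
              obtain ⟨v, hv, hadj⟩ := hadj₁'
              exact ⟨v, by have := hRsum v; omega, hadj⟩
        obtain ⟨y, hym₀, hsum_eq, hyadj⟩ := hkey
        refine ⟨y₁, y, e ::ₘ W', ?_, ?_, ?_, pair_le hm₁ hym₀, ⟨z, hRz, hadjz⟩, hyadj⟩
        · intro e' he'
          rcases Multiset.mem_cons.mp he' with rfl | he'
          · exact hB _ heB
          · exact hW'e e' he'
        · rw [Multiset.card_cons, hW'c]
        · calc (e ::ₘ W').sum = e + W'.sum := Multiset.sum_cons e W'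
            _ ≤ e + (Finsupp.single y₁' 1 + Finsupp.single y₂' 1 + R'.sum) :=
                add_le_add_right hW's e
            _ = Finsupp.single y₁ 1 + Finsupp.single y 1 + R.sum := by
                rw [hsum_eq, hez, hRsum', hfw]; abel

section IdealPart

variable (k : Type*) [Field k]

lemma X_mul_X (i j : Fin n) : (X i * X j : MvPolynomial (Fin n) k)
    = monomial (Finsupp.single i 1 + Finsupp.single j 1) 1 := by
  rw [show (X i : MvPolynomial (Fin n) k) = monomial (Finsupp.single i 1) 1 from rfl,
    show (X j : MvPolynomial (Fin n) k) = monomial (Finsupp.single j 1) 1 from rfl,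
    monomial_mul, one_mul]

/-- The set of exponents of the generators of `I^s`. -/
def genSet (G : SimpleGraph (Fin n)) (s : ℕ) : Set (Fin n →₀ ℕ) :=
  {d | ∃ B : Multiset (Fin n →₀ ℕ), (∀ e ∈ B, IsEdge G e) ∧ Multiset.card B = s ∧ B.sum = d}

lemma edgeIdeal_eq (G : SimpleGraph (Fin n)) :
    edgeIdeal k G = Ideal.span ((fun d => monomial d (1:k)) '' {d | IsEdge G d}) := by
  unfold edgeIdeal
  congr 1
  ext p
  constructor
  · rintro ⟨i, j, hij, rfl⟩
    exact ⟨Finsupp.single i 1 + Finsupp.single j 1, ⟨i, j, hij, rfl⟩, (X_mul_X k i j).symm⟩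
  · rintro ⟨d, ⟨i, j, hij, rfl⟩, rfl⟩
    exact ⟨i, j, hij, (X_mul_X k i j).symm⟩

lemma edgeIdeal_pow_eq (G : SimpleGraph (Fin n)) (s : ℕ) :
    edgeIdeal k G ^ s = Ideal.span ((fun d => monomial d (1:k)) '' genSet G s) := by
  induction s with
  | zero =>
    have h0 : genSet (n := n) G 0 = {0} := by
      ext d
      constructor
      · rintro ⟨B, _, hc, rfl⟩
        rw [Multiset.card_eq_zero.mp hc]
        rfl
      · rintro rfl
        exact ⟨0, by simp, rfl, rfl⟩
    rw [pow_zero, h0]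
    have h1 : ((fun d => monomial d (1:k)) '' {0} : Set (MvPolynomial (Fin n) k)) = {1} := by
      rw [Set.image_singleton]
      norm_num
    rw [h1, Ideal.span_singleton_one]
    exact Ideal.one_eq_top
  | succ s ih =>
    rw [pow_succ, ih, edgeIdeal_eq, Ideal.span_mul_span']
    congr 1
    ext p
    rw [Set.mem_mul]
    constructor
    · rintro ⟨a, ⟨da, ⟨Ba, hBa, hca, rfl⟩, rfl⟩, b, ⟨db, hdb, rfl⟩, rfl⟩
      refine ⟨Ba.sum + db, ⟨db ::ₘ Ba, ?_, ?_, ?_⟩, ?_⟩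
      · intro e he
        rcases Multiset.mem_cons.mp he with rfl | he
        · exact hdb
        · exact hBa e he
      · rw [Multiset.card_cons, hca]
      · rw [Multiset.sum_cons]
        exact add_comm _ _
      · rw [monomial_mul, one_mul]
    · rintro ⟨d, ⟨B, hB, hc, rfl⟩, rfl⟩
      have hne : B ≠ 0 := by
        intro h
        rw [h] at hc
        simp at hc
      obtain ⟨e, he⟩ := Multiset.exists_mem_of_ne_zero hne
      have hsplit : B = e ::ₘ B.erase e := (Multiset.cons_erase he).symm
      refine ⟨monomial (B.erase e).sum 1, ⟨(B.erase e).sum,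
        ⟨B.erase e, fun e' he' => hB e' (Multiset.mem_of_mem_erase he'), ?_, rfl⟩, rfl⟩,
        monomial e 1, ⟨e, hB e he, rfl⟩, ?_⟩
      · have h1 := congrArg Multiset.card hsplit
        rw [Multiset.card_cons] at h1
        omega
      · have hsum : B.sum = (B.erase e).sum + e := by
          conv_lhs => rw [hsplit]
          rw [Multiset.sum_cons]
          exact add_comm _ _
        rw [monomial_mul, one_mul, ← hsum]

lemma mem_pow_iff (G : SimpleGraph (Fin n)) (s : ℕ) (f : MvPolynomial (Fin n) k) :
    f ∈ edgeIdeal k G ^ s ↔ ∀ d ∈ f.support, ∃ B : Multiset (Fin n →₀ ℕ),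
      (∀ e ∈ B, IsEdge G e) ∧ Multiset.card B = s ∧ B.sum ≤ d := by
  rw [edgeIdeal_pow_eq, mem_ideal_span_monomial_image]
  constructor
  · intro h d hd
    obtain ⟨si, ⟨B, hB, hc, rfl⟩, hle⟩ := h d hd
    exact ⟨B, hB, hc, hle⟩
  · intro h d hd
    obtain ⟨B, hB, hc, hle⟩ := h d hd
    exact ⟨B.sum, ⟨B, hB, hc, rfl⟩, hle⟩

lemma degree_finset_sum {ι : Type*} (s : Finset ι) (g : ι → (Fin n →₀ ℕ)) :
    Finsupp.degree (∑ i ∈ s, g i) = ∑ i ∈ s, Finsupp.degree (g i) := by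
  simp [Finsupp.degree_eq_weight_one, map_sum]

lemma prod_X_eq {ι : Type*} (s : Finset ι) (g : ι → Fin n) :
    (∏ i ∈ s, (X (g i) : MvPolynomial (Fin n) k))
      = monomial (∑ i ∈ s, Finsupp.single (g i) 1) 1 := by
  classical
  induction s using Finset.induction with
  | empty => simp
  | insert _ _ hnotmem ih =>
    rw [Finset.prod_insert hnotmem, Finset.sum_insert hnotmem, ih,
      show (X (g _) : MvPolynomial (Fin n) k) = monomial (Finsupp.single (g _) 1) 1 from rfl,
      monomial_mul, one_mul]

end IdealPart

end EdgeColonAux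

/-- **Lemma (colon of `I^{t+1}` by a product of `2t` vertices).** If `x_1 ⋯ x_{2t} ∈ I^t`,
then `(I^{t+1} : x_1 ⋯ x_{2t}) = (I, E)` where `E` is generated by all degree-two monomials
`y₁ y₂` supported on `⋃ N(x_i)` with `y₁ y₂ x_1 ⋯ x_{2t} ∈ I^{t+1}`. -/
theorem pow_succ_edgeIdeal_colon_prod (k : Type*) [Field k] {n : ℕ}
    (G : SimpleGraph (Fin n)) (t : ℕ) (ht : 1 ≤ t) (x : Fin (2 * t) → Fin n)
    (hM : (∏ i, (X (x i) : MvPolynomial (Fin n) k)) ∈ edgeIdeal k G ^ t) :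
    (edgeIdeal k G ^ (t + 1)).colon (Ideal.span {∏ i, (X (x i) : MvPolynomial (Fin n) k)}) =
      edgeIdeal k G ⊔
        Ideal.span {m : MvPolynomial (Fin n) k |
          ∃ y₁ y₂ : Fin n, (∃ i, G.Adj (x i) y₁) ∧ (∃ i, G.Adj (x i) y₂) ∧
            (X y₁ * X y₂ * ∏ i, (X (x i) : MvPolynomial (Fin n) k)) ∈ edgeIdeal k G ^ (t + 1) ∧
            m = X y₁ * X y₂} := by
  classical
  have hMD := EdgeColonAux.prod_X_eq k Finset.univ x
  set D : Fin n →₀ ℕ := ∑ i, Finsupp.single (x i) 1 with hDdef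
  rw [hMD] at hM ⊢
  have hDdeg : Finsupp.degree D = 2 * t := by
    rw [hDdef, EdgeColonAux.degree_finset_sum]
    simp [EdgeColonAux.degree_single]
  have hsuppD : D ∈ (monomial D (1:k)).support := by
    rw [support_monomial, if_neg one_ne_zero]
    exact Finset.mem_singleton_self _
  obtain ⟨R, hRe, hRc, hRle⟩ := (EdgeColonAux.mem_pow_iff k G t _).mp hM D hsuppD
  have hRsum : R.sum = D := EdgeColonAux.eq_of_le_of_degree_eq hRle
    (by rw [EdgeColonAux.degree_sum_edges hRe, hRc, hDdeg])
  have hDsupp : ∀ v, 0 < D v → ∃ i, x i = v := by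
    intro v hv
    by_contra hc
    push_neg at hc
    have h0 : D v = 0 := by
      rw [hDdef, Finsupp.finset_sum_apply]
      exact Finset.sum_eq_zero fun i _ => by
        rw [Finsupp.single_apply, if_neg (hc i)]
    omega
  apply le_antisymm
  · intro f hf
    rw [Ideal.mem_colon_span_singleton] at hf
    rw [← f.support_sum_monomial_coeff]
    refine Ideal.sum_mem _ fun m hm => ?_
    have hm' : m + D ∈ (f * monomial D (1:k)).support := by
      rw [mem_support_iff, coeff_mul_monomial, mul_one]
      exact mem_support_iff.mp hm
    obtain ⟨B, hBe, hBc, hBle⟩ := (EdgeColonAux.mem_pow_iff k G (t+1) _).mp hf (m + D) hm'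
    rw [← hRsum] at hBle
    rcases EdgeColonAux.key G t B R m hBe hRe hRc hBc hBle with
      ⟨e, ⟨a, b, hab, rfl⟩, hle⟩ |
      ⟨y₁, y₂, W, hWe, hWc, hWs, hym, ⟨v₁, hv₁, hadj₁⟩, ⟨v₂, hv₂, hadj₂⟩⟩
    · apply Ideal.mem_sup_left
      rw [EdgeColonAux.edgeIdeal_eq, mem_ideal_span_monomial_image]
      intro xi hxi
      rw [support_monomial, if_neg (mem_support_iff.mp hm), Finset.mem_singleton] at hxi
      subst hxi
      exact ⟨_, ⟨a, b, hab, rfl⟩, hle⟩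
    · apply Ideal.mem_sup_right
      rw [hRsum] at hv₁ hv₂
      obtain ⟨i₁, hi₁⟩ := hDsupp v₁ hv₁
      obtain ⟨i₂, hi₂⟩ := hDsupp v₂ hv₂
      have hgen : (X y₁ * X y₂ : MvPolynomial (Fin n) k) ∈
          {q : MvPolynomial (Fin n) k | ∃ y₁ y₂ : Fin n, (∃ i, G.Adj (x i) y₁) ∧
            (∃ i, G.Adj (x i) y₂) ∧
            (X y₁ * X y₂ * monomial D 1) ∈ edgeIdeal k G ^ (t + 1) ∧ q = X y₁ * X y₂} := by
        refine ⟨y₁, y₂, ⟨i₁, by rw [hi₁]; exact hadj₁.symm⟩,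
          ⟨i₂, by rw [hi₂]; exact hadj₂.symm⟩, ?_, rfl⟩
        rw [EdgeColonAux.X_mul_X, monomial_mul, one_mul, EdgeColonAux.mem_pow_iff]
        intro xi hxi
        rw [support_monomial, if_neg one_ne_zero, Finset.mem_singleton] at hxi
        subst hxi
        refine ⟨W, hWe, hWc, ?_⟩
        rw [← hRsum]
        exact hWs
      have hfac : (monomial m (coeff m f) : MvPolynomial (Fin n) k)
          = monomial (m - (Finsupp.single y₁ 1 + Finsupp.single y₂ 1)) (coeff m f)
            * (X y₁ * X y₂) := by
        rw [EdgeColonAux.X_mul_X, monomial_mul, mul_one, tsub_add_cancel_of_le hym]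
      rw [hfac]
      exact Ideal.mul_mem_left _ _ (Ideal.subset_span hgen)
  · rw [sup_le_iff]
    constructor
    · intro f hf
      rw [Ideal.mem_colon_span_singleton, pow_succ, mul_comm f (monomial D 1)]
      exact Ideal.mul_mem_mul hM hf
    · rw [Ideal.span_le]
      rintro p ⟨y₁, y₂, -, -, hmem, rfl⟩
      rw [SetLike.mem_coe, Ideal.mem_colon_span_singleton]
      exact hmem
end

section
/- Let I be a monomial ideal in a polynomial ring R over a field, let M be a monomial in R, and let y be a variable of R that does not divide M. Let K be the extension in R of the image of I in R/(y), i.e., the monomial ideal of R generated by those monomial generators of I not divisible by y. Then ((I : M), y) = ((K : M), y). -/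
open MvPolynomial

/-- **Lemma.** Let `I` be a monomial ideal (generated by the monomials `x^s`, `s ∈ S`),
let `M = x^{m₀}` be a monomial, and let `y = x_j` be a variable not dividing `M`.  If `K`
is the extension in `R` of the image of `I` in `R/(y)` (the ideal generated by the monomial
generators of `I` not divisible by `y`), then `((I : M), y) = ((K : M), y)`. -/
theorem colon_monomial_sup_var_eq (k : Type*) [Field k] {n : ℕ}
    (S : Set (Fin n →₀ ℕ)) (I : Ideal (MvPolynomial (Fin n) k))
    (hI : I = Ideal.span ((fun s => (monomial s (1 : k) : MvPolynomial (Fin n) k)) '' S))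
    (m₀ : Fin n →₀ ℕ) (j : Fin n) (hj : m₀ j = 0)
    (K : Ideal (MvPolynomial (Fin n) k))
    (hK : K = Ideal.span ((fun s => (monomial s (1 : k) : MvPolynomial (Fin n) k)) ''
      {s ∈ S | s j = 0})) :
    I.colon (Ideal.span {monomial m₀ (1 : k)}) ⊔ Ideal.span {X j} =
      K.colon (Ideal.span {monomial m₀ (1 : k)}) ⊔ Ideal.span {X j} := by
  set M : MvPolynomial (Fin n) k := monomial m₀ (1 : k) with hM
  set φ : MvPolynomial (Fin n) k →ₐ[k] MvPolynomial (Fin n) k :=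
    aeval (fun i => if i = j then 0 else X i) with hφ
  -- φ fixes M
  have hφM : φ M = M := by
    rw [hM, hφ]
    rw [aeval_monomial]
    rw [monomial_eq]
    congr 1
    refine Finsupp.prod_congr (fun i hi => ?_)
    have : i ≠ j := fun h => by
      subst h; exact Finsupp.mem_support_iff.mp hi hj
    simp [this]
  -- diff lemma
  have hdiff : ∀ g : MvPolynomial (Fin n) k, g - φ g ∈ Ideal.span {X j} := by
    intro g
    induction g using MvPolynomial.induction_on with
    | C a => simp
    | add p q hp hq =>
      have := Ideal.add_mem _ hp hq
      simpa [sub_add_sub_comm] using this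
    | mul_X p i hp =>
      by_cases hij : i = j
      · subst hij
        rw [Ideal.mem_span_singleton]
        have h0 : φ (p * X i) = 0 := by simp [hφ]
        rw [h0, sub_zero]
        exact dvd_mul_left _ _
      · have : p * X i - φ (p * X i) = (p - φ p) * X i := by
          simp only [map_mul, hφ, aeval_X, if_neg hij]; ring
        rw [this]
        exact Ideal.mul_mem_right _ _ hp
  -- φ maps I into K
  have hφI : ∀ g ∈ I, φ g ∈ K := by
    intro g hg
    have : Ideal.map φ I ≤ K := by
      rw [hI, Ideal.map_span]
      apply Ideal.span_le.mpr
      rintro _ ⟨_, ⟨s, hs, rfl⟩, rfl⟩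
      by_cases hsj : s j = 0
      · have : φ (monomial s (1 : k)) = monomial s 1 := by
          rw [hφ, aeval_monomial, monomial_eq]
          congr 1
          refine Finsupp.prod_congr (fun i hi => ?_)
          have : i ≠ j := fun h => by
            subst h; exact Finsupp.mem_support_iff.mp hi hsj
          simp [this]
        rw [this, hK]
        exact Ideal.subset_span ⟨s, ⟨hs, hsj⟩, rfl⟩
      · have : φ (monomial s (1 : k)) = 0 := by
          rw [hφ, aeval_monomial, Finsupp.prod]
          rw [Finset.prod_eq_zero (Finsupp.mem_support_iff.mpr hsj)
            (by simp [zero_pow hsj])]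
          simp
        rw [this]; exact Ideal.zero_mem _
    exact this (Ideal.mem_map_of_mem φ hg)
  have hKI : K ≤ I := by
    rw [hI, hK]
    exact Ideal.span_mono (Set.image_mono (Set.sep_subset _ _))
  apply le_antisymm
  · apply sup_le _ le_sup_right
    intro f hf
    rw [Ideal.mem_colon_span_singleton] at hf
    have h1 : φ f ∈ K.colon (Ideal.span {M}) := by
      rw [Ideal.mem_colon_span_singleton]
      have : φ f * M = φ (f * M) := by rw [map_mul, hφM]
      rw [this]
      exact hφI _ hf
    have : f = φ f + (f - φ f) := by ring
    rw [this]
    exact Ideal.add_mem _ (Ideal.mem_sup_left h1) (Ideal.mem_sup_right (hdiff f))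
  · exact sup_le_sup_right (Submodule.colon_mono hKI le_rfl) _
end

section
/- Let G be a finite simple graph, let x_1,...,x_r be vertices of G such that the induced subgraph of G on {x_1,...,x_r} is connected, and fix a vertex u in the connected component of G containing x_1,...,x_r. Let {y_1,...,y_s} be a subset of (⋃_{i=1}^{r} N(x_i)) \ {x_1,...,x_r}. Then there exists an ordering of y_1,...,y_s such that for all i < s, the vertices x_1,...,x_r lie in the connected component containing u of the graph obtained from G by deleting the vertices y_1,...,y_i (together with all edges meeting them). -/
open SimpleGraph

private lemma walk_to_induce {V : Type*} {G : SimpleGraph V} {S : Set V} :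
    ∀ {a b : V} (p : G.Walk a b), (∀ v ∈ p.support, v ∈ S) →
    ∀ (ha : a ∈ S) (hb : b ∈ S), (G.induce S).Reachable ⟨a, ha⟩ ⟨b, hb⟩ := by
  intro a b p
  induction p with
  | nil => intro _ ha hb; rfl
  | @cons a c b h q ih =>
    intro hsup ha hb
    have hc : c ∈ S := hsup c (by simp)
    have hadj : (G.induce S).Adj ⟨a, ha⟩ ⟨c, hc⟩ := h
    exact hadj.reachable.trans (ih (fun v hv => hsup v (by simp [hv])) hc hb)

private lemma claimB {V : Type*} [DecidableEq V] {G : SimpleGraph V} {s : ℕ} {y : Fin s → V} {u : V}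
    (hyinj : Function.Injective y) :
    ∀ n : ℕ, ∀ (j : Fin s) (q : G.Walk u (y j)), q.length ≤ n →
      ∃ (j₁ : Fin s) (q' : G.Walk u (y j₁)), ∀ j', j' ≠ j₁ → y j' ∉ q'.support := by
  intro n
  induction n with
  | zero =>
    intro j q hq
    refine ⟨j, q, fun j' hne hmem => ?_⟩
    have h0 : q.length = 0 := Nat.le_zero.mp hq
    have hu : u = y j := Walk.eq_of_length_eq_zero h0
    have : q.support = [u] := by
      cases q with
      | nil => simp
      | cons h p => simp at h0
    rw [this] at hmem
    simp at hmem
    exact hne (hyinj (hmem.trans hu))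
  | succ n ih =>
    intro j q hq
    by_cases hex : ∃ j', y j' ∈ q.support ∧ j' ≠ j
    · obtain ⟨j', hmem, hne⟩ := hex
      have hneq : y j' ≠ y j := fun h => hne (hyinj h)
      have hlen : (q.takeUntil _ hmem).length ≤ n := by
        have hspec := q.take_spec hmem
        have hadd : (q.takeUntil _ hmem).length + (q.dropUntil _ hmem).length = q.length := by
          rw [← Walk.length_append, hspec]
        have hd : 0 < (q.dropUntil _ hmem).length := by
          rcases Nat.eq_zero_or_pos (q.dropUntil _ hmem).length with h | h
          · exact absurd (Walk.eq_of_length_eq_zero h) hneq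
          · exact h
        omega
      exact ih j' (q.takeUntil _ hmem) hlen
    · push_neg at hex
      exact ⟨j, q, fun j' hne hmem => hne (hex j' hmem)⟩

/-- **Lemma (ordering the neighbors).** Let `G` be a finite simple graph, `x_1, ..., x_r`
vertices whose induced subgraph is connected, `u` a vertex in the connected component of `G`
containing the `x_m`, and `{y_1, ..., y_s}` a subset of `(⋃ N(x_m)) \ {x_1, ..., x_r}`.
Then the `y_j` can be reordered so that for all `i < s`, after deleting the first `i` of the
`y_j` from `G`, the vertices `x_1, ..., x_r` still lie in the connected component
containing `u`. -/
theorem exists_order_neighbors {V : Type*} [Fintype V] (G : SimpleGraph V)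
    (r s : ℕ) (x : Fin r → V) (u : V)
    (hind : (G.induce (Set.range x)).Connected)
    (hu : ∀ m : Fin r, G.Reachable u (x m))
    (y : Fin s → V) (hyinj : Function.Injective y)
    (hyN : ∀ j : Fin s, ∃ m : Fin r, G.Adj (x m) (y j))
    (hynx : ∀ j : Fin s, ∀ m : Fin r, y j ≠ x m) :
    ∃ σ : Equiv.Perm (Fin s), ∀ i : ℕ, i < s → ∀ m : Fin r,
      ∃ (hu' : u ∈ {v : V | ∀ j : Fin s, (j : ℕ) < i → v ≠ y (σ j)})
        (hx' : x m ∈ {v : V | ∀ j : Fin s, (j : ℕ) < i → v ≠ y (σ j)}),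
        (G.induce {v : V | ∀ j : Fin s, (j : ℕ) < i → v ≠ y (σ j)}).Reachable
          ⟨u, hu'⟩ ⟨x m, hx'⟩ := by
  classical
  rcases Nat.eq_zero_or_pos s with hs | hs
  · exact ⟨1, fun i hi => absurd hi (by omega)⟩
  rcases isEmpty_or_nonempty (Fin r) with hr | hr
  · exact ⟨1, fun i hi m => isEmptyElim m⟩
  -- walks inside the x's
  have Xwalk : ∀ m m' : Fin r, ∃ w : G.Walk (x m) (x m'),
      ∀ v ∈ w.support, v ∈ Set.range x := by
    intro m m'
    obtain ⟨w⟩ := hind.preconnected ⟨x m, Set.mem_range_self m⟩ ⟨x m', Set.mem_range_self m'⟩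
    refine ⟨w.map (SimpleGraph.Embedding.induce (Set.range x)).toHom, ?_⟩
    intro v hv
    erw [Walk.support_map, List.mem_map] at hv
    obtain ⟨⟨v', hv'⟩, _, rfl⟩ := hv
    exact hv'
  -- key step: there is a single index j₁ such that each x m can be reached from u
  -- avoiding all the y's except possibly y j₁
  have key : ∃ j₁ : Fin s, ∀ m : Fin r, ∃ W : G.Walk u (x m),
      ∀ j, j ≠ j₁ → y j ∉ W.support := by
    obtain ⟨m₀⟩ := hr
    obtain ⟨p⟩ := hu m₀
    by_cases hyp : ∃ j, y j ∈ p.support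
    · obtain ⟨j, hj⟩ := hyp
      obtain ⟨j₁, q', hq'⟩ := claimB hyinj (p.takeUntil _ hj).length j (p.takeUntil _ hj) le_rfl
      obtain ⟨m', hm'⟩ := hyN j₁
      refine ⟨j₁, fun m => ?_⟩
      obtain ⟨w, hw⟩ := Xwalk m' m
      refine ⟨(q'.concat hm'.symm).append w, fun j hjne hmem => ?_⟩
      rw [Walk.mem_support_append_iff] at hmem
      rcases hmem with h1 | h2
      · rw [Walk.support_concat, List.mem_append] at h1
        rcases h1 with h | h
        · exact hq' j hjne h
        · exact hynx j m' (by simpa using h)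
      · obtain ⟨m'', hm''⟩ := hw _ h2
        exact hynx j m'' hm''.symm
    · push_neg at hyp
      refine ⟨⟨0, hs⟩, fun m => ?_⟩
      obtain ⟨w, hw⟩ := Xwalk m₀ m
      refine ⟨p.append w, fun j _ hmem => ?_⟩
      rw [Walk.mem_support_append_iff] at hmem
      rcases hmem with h1 | h2
      · exact hyp j h1
      · obtain ⟨m'', hm''⟩ := hw _ h2
        exact hynx j m'' hm''.symm
  obtain ⟨j₁, hkey⟩ := key
  set last : Fin s := ⟨s - 1, by omega⟩ with hlast
  refine ⟨Equiv.swap last j₁, fun i hi m => ?_⟩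
  obtain ⟨W, hW⟩ := hkey m
  have hsub : ∀ v ∈ W.support,
      v ∈ {v : V | ∀ j : Fin s, (j : ℕ) < i → v ≠ y (Equiv.swap last j₁ j)} := by
    intro v hv j hji heq
    have hjne : j ≠ last := by
      intro h
      rw [h, hlast] at hji
      simp at hji
      omega
    have hne2 : Equiv.swap last j₁ j ≠ j₁ := by
      intro h
      exact hjne ((Equiv.swap last j₁).injective
        (h.trans (Equiv.swap_apply_left last j₁).symm))
    exact hW _ hne2 (heq ▸ hv)
  exact ⟨hsub u W.start_mem_support, hsub (x m) W.end_mem_support,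
    walk_to_induce W hsub _ _⟩
end
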